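/- Let (H,R) be a finite-dimensional quasi-triangular Hopf algebra and W a left H-module, regarded as a left H_R-comodule via ρ_R(w) = S(R_2^2 R_1^1) ⊗ R_2^1 R_1^2 w. Then the map H⊗W → W̄⊗H, h⊗w ↦ h_(1)w ⊗ h_(2), is an isomorphism in _H^{H_R}M, with inverse w⊗h ↦ S^{-1}(h_(1))w ⊗ h_(2). Here H⊗W carries the structure h'(h⊗w) = h'h⊗w, ρ(h⊗w) = h_(1) ·_ad w_{⟨-1⟩} ⊗ h_(2) ⊗ w_{⟨0⟩}, and W̄⊗H denotes W⊗H with the diagonal H-action and the H_R-coaction on the first factor. -/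

import Mathlib

open TensorProduct LinearMap

noncomputable section
namespace Paper

variable (k : Type*) [Field k] (H : Type*) [Ring H] [HopfAlgebra k H]

/-- The antipode of `H`. -/
abbrev S : H →ₗ[k] H := HopfAlgebra.antipode (R := k)

/-- The comultiplication of `H`. -/
abbrev Δ : H →ₗ[k] H ⊗[k] H := Coalgebra.comul

/-- The counit of `H`. -/
abbrev ε : H →ₗ[k] k := Coalgebra.counit

/-- The left adjoint action as a linear map `H ⊗ H → H`, `h ⊗ x ↦ h₍₁₎ * x * S h₍₂₎`. -/
def adT : H ⊗[k] H →ₗ[k] H :=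
  mul' k H ∘ₗ
    lTensor H (mul' k H) ∘ₗ
    lTensor H (TensorProduct.comm k H H).toLinearMap ∘ₗ
    (TensorProduct.assoc k H H H).toLinearMap ∘ₗ
    rTensor H (lTensor H (S k H)) ∘ₗ
    rTensor H (Δ k H)

/-- The left adjoint action, pointwise: `ad h x = h₍₁₎ * x * S h₍₂₎`. -/
def ad (h x : H) : H := adT k H (h ⊗ₜ x)

variable (R : H ⊗[k] H)

/-- `R₁₂ ∈ H ⊗ H ⊗ H`. -/
def r12 : H ⊗[k] (H ⊗[k] H) :=
  (Algebra.TensorProduct.map (AlgHom.id k H) Algebra.TensorProduct.includeLeft) R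

/-- `R₁₃ ∈ H ⊗ H ⊗ H`. -/
def r13 : H ⊗[k] (H ⊗[k] H) :=
  (Algebra.TensorProduct.map (AlgHom.id k H) Algebra.TensorProduct.includeRight) R

/-- `R₂₃ ∈ H ⊗ H ⊗ H`. -/
def r23 : H ⊗[k] (H ⊗[k] H) :=
  (Algebra.TensorProduct.includeRight : (H ⊗[k] H) →ₐ[k] H ⊗[k] (H ⊗[k] H)) R

/-- `(H, R)` is a quasi-triangular Hopf algebra, i.e. `R` is invertible,
`R Δ(h) R⁻¹ = Δᵒᵖ(h)`, `(Δ ⊗ id)(R) = R₁₃R₂₃` and `(id ⊗ Δ)(R) = R₁₃R₁₂`. -/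
structure IsQuasiTriangular : Prop where
  isUnit : IsUnit R
  comul_compat : ∀ h : H, R * Δ k H h = (TensorProduct.comm k H H) (Δ k H h) * R
  comul_rTensor :
    (TensorProduct.assoc k H H H) ((rTensor H (Δ k H)) R) = r13 k H R * r23 k H R
  comul_lTensor : (lTensor H (Δ k H)) R = r13 k H R * r12 k H R

/-- The canonical element `u = Σ S(R₂² R₁¹) ⊗ R₂¹ R₁² = (S ⊗ id)(τ(R) · R) ∈ H ⊗ H`. -/
def uElt : H ⊗[k] H := rTensor H (S k H) ((TensorProduct.comm k H H) R * R)

/-- The element `Σ R₁² R₂¹ ⊗ R₁¹ R₂² = τ(R · τ(R)) ∈ H ⊗ H`. -/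
def vElt : H ⊗[k] H := (TensorProduct.comm k H H) (R * (TensorProduct.comm k H H) R)

/-- The factorization map `H* → H`, `p ↦ ⟨p, R₁² R₂¹⟩ R₁¹ R₂²`. -/
def factMap (p : Module.Dual k H) : H :=
  (TensorProduct.lid k H) ((rTensor H p) (vElt k H R))

/-- `(H, R)` is factorizable: the factorization map is bijective. -/
def IsFactorizable : Prop := Function.Bijective (factMap k H R)

/-- The comultiplication `Δ_R` of the transmuted braided group `H_R`:
`Δ_R(h) = h₍₁₎ S(R²) ⊗ R¹ ·ad h₍₂₎`. -/
def DeltaR : H →ₗ[k] H ⊗[k] H :=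
  (TensorProduct.map
      ((mul' k H) ∘ₗ lTensor H (S k H))
      ((adT k H) ∘ₗ (TensorProduct.comm k H H).toLinearMap)) ∘ₗ
    (tensorTensorTensorComm k H H H H).toLinearMap ∘ₗ
    (lTensor (H ⊗[k] H) (TensorProduct.comm k H H).toLinearMap) ∘ₗ
    ((TensorProduct.mk k (H ⊗[k] H) (H ⊗[k] H)).flip R) ∘ₗ
    (Δ k H)

section Comodule

variable {k H}
variable {V : Type*} [AddCommGroup V] [Module k V]
variable {P : Type*} [AddCommGroup P] [Module k P]

/-- `ρ : V → H ⊗ V` is a left comodule structure over the coalgebra `(H, Δ', ε')`. -/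
def IsComodStr (Δ' : H →ₗ[k] H ⊗[k] H) (ε' : H →ₗ[k] k) (ρ : V →ₗ[k] H ⊗[k] V) : Prop :=
  (TensorProduct.assoc k H H V).toLinearMap ∘ₗ rTensor V Δ' ∘ₗ ρ = lTensor H ρ ∘ₗ ρ ∧
    (TensorProduct.lid k V).toLinearMap ∘ₗ rTensor V ε' ∘ₗ ρ = LinearMap.id

/-- `act : H ⊗ V → V` is a left module structure over the algebra `H`. -/
def IsActionStr (act : H ⊗[k] V →ₗ[k] V) : Prop :=
  (∀ v : V, act (1 ⊗ₜ v) = v) ∧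
    ∀ (g h : H) (v : V), act ((g * h) ⊗ₜ v) = act (g ⊗ₜ act (h ⊗ₜ v))

/-- The compatibility condition making `(V, act, ρ)` an object of `{}_H^{H_R}𝓜`:
`ρ(h·v) = h₍₁₎ ·ad v₍₋₁₎ ⊗ h₍₂₎ · v₍₀₎`. -/
def IsYDCompat (act : H ⊗[k] V →ₗ[k] V) (ρ : V →ₗ[k] H ⊗[k] V) : Prop :=
  ρ ∘ₗ act =
    (TensorProduct.map (adT k H) act) ∘ₗ
      (tensorTensorTensorComm k H H H V).toLinearMap ∘ₗ (TensorProduct.map (Δ k H) ρ)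

/-- `(V, act, ρ)` is an object of the category `{}_H^{H_R}𝓜` of relative Hopf modules. -/
def IsRelHopfModule (R : H ⊗[k] H) (act : H ⊗[k] V →ₗ[k] V) (ρ : V →ₗ[k] H ⊗[k] V) : Prop :=
  IsActionStr act ∧ IsComodStr (DeltaR k H R) (ε k H) ρ ∧ IsYDCompat act ρ

/-- A submodule `U` is a subcomodule for the coaction `ρ : V → H ⊗ V`. -/
def IsSubcomodule (ρ : V →ₗ[k] H ⊗[k] V) (U : Submodule k V) : Prop :=
  ∀ u ∈ U, ρ u ∈ LinearMap.range (lTensor H U.subtype)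

/-- A left comodule is simple if it is nonzero and has no nontrivial subcomodules. -/
def IsSimpleComodule (ρ : V →ₗ[k] H ⊗[k] V) : Prop :=
  (⊥ : Submodule k V) ≠ ⊤ ∧ ∀ U : Submodule k V, IsSubcomodule ρ U → U = ⊥ ∨ U = ⊤

/-- A submodule `U ≤ V` is a subobject of `(V, act, ρ)` in `{}_H^{H_R}𝓜`
(i.e. stable under the action and a subcomodule). -/
def IsYDSubmodule (act : H ⊗[k] V →ₗ[k] V) (ρ : V →ₗ[k] H ⊗[k] V)
    (U : Submodule k V) : Prop :=
  (∀ (h : H), ∀ u ∈ U, act (h ⊗ₜ u) ∈ U) ∧ IsSubcomodule ρ U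

/-- `(V, act, ρ)` is a simple (irreducible) object. -/
def IsSimpleYD (act : H ⊗[k] V →ₗ[k] V) (ρ : V →ₗ[k] H ⊗[k] V) : Prop :=
  (⊥ : Submodule k V) ≠ ⊤ ∧ ∀ U : Submodule k V, IsYDSubmodule act ρ U → U = ⊥ ∨ U = ⊤

/-- The subcoalgebra `D_V ⊆ H_R` associated with a comodule `(V, ρ)`:
the span of all `v₍₋₁₎ ⟨φ, v₍₀₎⟩`. -/
def Dspace (ρ : V →ₗ[k] H ⊗[k] V) : Submodule k H :=
  Submodule.span k {x : H | ∃ (v : V) (φ : Module.Dual k V),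
    x = (TensorProduct.rid k H) ((lTensor H φ) (ρ v))}

end Comodule

section Coalg

variable {k H}

/-- A submodule `C ≤ H` is a subcoalgebra for the comultiplication `Δ'`. -/
def IsSubcoalgebra (Δ' : H →ₗ[k] H ⊗[k] H) (C : Submodule k H) : Prop :=
  ∀ c ∈ C, Δ' c ∈ LinearMap.range (TensorProduct.map C.subtype C.subtype)

/-- A subcoalgebra is simple if it is nonzero and contains no nontrivial subcoalgebra. -/
def IsSimpleSubcoalgebra (Δ' : H →ₗ[k] H ⊗[k] H) (C : Submodule k H) : Prop :=
  C ≠ ⊥ ∧ IsSubcoalgebra Δ' C ∧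
    ∀ C' ≤ C, IsSubcoalgebra Δ' C' → C' = ⊥ ∨ C' = C

/-- A coalgebra is cosemisimple if it is the sum of its simple subcoalgebras. -/
def IsCosemisimple (Δ' : H →ₗ[k] H ⊗[k] H) : Prop :=
  sSup {C : Submodule k H | IsSimpleSubcoalgebra Δ' C} = ⊤

/-- A submodule `C ≤ H` is `H`-stable (for the left adjoint action). -/
def IsHStable (C : Submodule k H) : Prop :=
  ∀ h : H, ∀ c ∈ C, ad k H h c ∈ C

end Coalg

section ModuleMaps

variable {k H}
variable (W : Type*) [AddCommGroup W] [Module k W] [Module H W] [IsScalarTower k H W]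
variable (M : Type*) [AddCommGroup M] [Module k M] [Module H M] [IsScalarTower k H M]

/-- The `H`-module structure of `W` as a linear map `H ⊗ W → W`. -/
def actT : H ⊗[k] W →ₗ[k] W :=
  TensorProduct.lift (Algebra.lsmul k k W).toLinearMap

variable {W M}

/-- The left `H_R`-comodule structure on a module with action `aW`, induced by the
element `u ∈ H ⊗ H`: `ρ_R(w) = S(R₂² R₁¹) ⊗ R₂¹ R₁² w`. -/
def coactR (R : H ⊗[k] H) {W : Type*} [AddCommGroup W] [Module k W]
    (aW : H ⊗[k] W →ₗ[k] W) : W →ₗ[k] H ⊗[k] W :=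
  (lTensor H aW) ∘ₗ (TensorProduct.assoc k H H W).toLinearMap ∘ₗ
    (TensorProduct.mk k (H ⊗[k] H) W (uElt k H R))

/-- The diagonal `H`-action on `W ⊗ M`: `h · (w ⊗ m) = h₍₁₎ w ⊗ h₍₂₎ m`. -/
def diagAct {W M : Type*} [AddCommGroup W] [Module k W] [AddCommGroup M] [Module k M]
    (aW : H ⊗[k] W →ₗ[k] W) (aM : H ⊗[k] M →ₗ[k] M) :
    H ⊗[k] (W ⊗[k] M) →ₗ[k] W ⊗[k] M :=
  (TensorProduct.map aW aM) ∘ₗ (tensorTensorTensorComm k H H W M).toLinearMap ∘ₗ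
    rTensor (W ⊗[k] M) (Δ k H)

/-- The coaction on `W̄ ⊗ M` (coacting on the first factor only). -/
def barCoact {W : Type*} [AddCommGroup W] [Module k W]
    (ρ : W →ₗ[k] H ⊗[k] W) (M : Type*) [AddCommGroup M] [Module k M] :
    W ⊗[k] M →ₗ[k] H ⊗[k] (W ⊗[k] M) :=
  (TensorProduct.assoc k H W M).toLinearMap ∘ₗ rTensor M ρ

/-- The `H`-action on `H ⊗ W` by left multiplication on the first factor. -/
def regAct (W : Type*) [AddCommGroup W] [Module k W] :
    H ⊗[k] (H ⊗[k] W) →ₗ[k] H ⊗[k] W :=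
  rTensor W (mul' k H) ∘ₗ (TensorProduct.assoc k H H W).symm.toLinearMap

/-- The `H_R`-coaction on `H ⊗ W` induced by a coaction `ρ` on `W`:
`ρ(h ⊗ w) = h₍₁₎ ·ad w₍₋₁₎ ⊗ h₍₂₎ ⊗ w₍₀₎`. -/
def inducedCoact {W : Type*} [AddCommGroup W] [Module k W]
    (ρ : W →ₗ[k] H ⊗[k] W) : H ⊗[k] W →ₗ[k] H ⊗[k] (H ⊗[k] W) :=
  rTensor (H ⊗[k] W) (adT k H) ∘ₗ (tensorTensorTensorComm k H H H W).toLinearMap ∘ₗ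
    TensorProduct.map (Δ k H) ρ

/-- The left `H`-module structure on `W*` given by `⟨h φ, w⟩ = ⟨φ, S⁻¹(h) w⟩`,
where `S'` is the (given) inverse of the antipode. -/
def dualAct {W : Type*} [AddCommGroup W] [Module k W]
    (S' : H →ₗ[k] H) (aW : H ⊗[k] W →ₗ[k] W) :
    H ⊗[k] Module.Dual k W →ₗ[k] Module.Dual k W :=
  TensorProduct.lift
    (((llcomp k W W k).flip) ∘ₗ
      ((llcomp k W (H ⊗[k] W) W aW) ∘ₗ (TensorProduct.mk k H W) ∘ₗ S'))

end ModuleMaps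

section DualComod

variable {k H}
variable {W : Type*} [AddCommGroup W] [Module k W] [Module.Finite k W] [Module.Free k W]

/-- The right `D`-comodule structure on `W*` induced from a left coaction `ρ` on `W`,
characterized by `Σ ⟨φ₍₀₎, w⟩ φ₍₁₎ = Σ w₍₋₁₎ ⟨φ, w₍₀₎⟩`. -/
def dualCoact (ρ : W →ₗ[k] H ⊗[k] W) :
    Module.Dual k W →ₗ[k] Module.Dual k W ⊗[k] H :=
  (dualTensorHomEquiv k W H).symm.toLinearMap ∘ₗ
    (lcomp k H ρ) ∘ₗ
    (llcomp k (H ⊗[k] W) (H ⊗[k] k) H (TensorProduct.rid k H).toLinearMap) ∘ₗ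
    (lTensorHom (R := k) H)

end DualComod

section Cotensor

variable {k H}
variable {P V : Type*} [AddCommGroup P] [Module k P] [AddCommGroup V] [Module k V]

/-- The cotensor product `P □ V` of a right comodule `(P, ρ')` and a left comodule
`(V, ρ)`, realized as a subspace of `P ⊗ V`. -/
def cotensor (ρ' : P →ₗ[k] P ⊗[k] H) (ρ : V →ₗ[k] H ⊗[k] V) :
    Submodule k (P ⊗[k] V) :=
  LinearMap.ker
    ((TensorProduct.assoc k P H V).toLinearMap ∘ₗ rTensor V ρ' - lTensor P ρ)

end Cotensor

section NW

variable {k H}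
variable {W : Type*} [AddCommGroup W] [Module k W] [Module.Finite k W] [Module.Free k W]

/-- The underlying subspace of the `R`-adjoint-stable algebra
`N_W = W* □_D (H ⊗ W)`. -/
def NWspace (ρ : W →ₗ[k] H ⊗[k] W) :
    Submodule k (Module.Dual k W ⊗[k] (H ⊗[k] W)) :=
  cotensor (dualCoact ρ) (inducedCoact ρ)

variable (k H W)

/-- The multiplication of `N_W` as a linear map on the ambient space
`W* ⊗ (H ⊗ W)`: `(φ ⊗ h ⊗ w) ∘ (ψ ⊗ g ⊗ v) = ψ ⊗ g h ⊗ ⟨φ, v⟩ w`. -/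
def muNW :
    (Module.Dual k W ⊗[k] (H ⊗[k] W)) ⊗[k] (Module.Dual k W ⊗[k] (H ⊗[k] W)) →ₗ[k]
      Module.Dual k W ⊗[k] (H ⊗[k] W) :=
  (TensorProduct.assoc k (Module.Dual k W) H W).toLinearMap ∘ₗ
    (TensorProduct.map LinearMap.id
      (((TensorProduct.lid k W).toLinearMap) ∘ₗ
        (rTensor W (contractLeft k W)) ∘ₗ
        (TensorProduct.assoc k (Module.Dual k W) W W).symm.toLinearMap ∘ₗ
        (lTensor (Module.Dual k W) (TensorProduct.comm k W W).toLinearMap))) ∘ₗ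
    (tensorTensorTensorComm k (Module.Dual k W) (Module.Dual k W) H
      (W ⊗[k] W)).toLinearMap ∘ₗ
    (TensorProduct.map (TensorProduct.comm k (Module.Dual k W)
        (Module.Dual k W)).toLinearMap
      ((TensorProduct.map ((mul' k H) ∘ₗ (TensorProduct.comm k H H).toLinearMap)
          LinearMap.id) ∘ₗ
        (tensorTensorTensorComm k H W H W).toLinearMap)) ∘ₗ
    (tensorTensorTensorComm k (Module.Dual k W) (H ⊗[k] W) (Module.Dual k W)
      (H ⊗[k] W)).toLinearMap

variable {k H W}

/-- The multiplication of `N_W`, pointwise. -/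
def muN (x y : Module.Dual k W ⊗[k] (H ⊗[k] W)) :
    Module.Dual k W ⊗[k] (H ⊗[k] W) :=
  muNW k H W (x ⊗ₜ y)

variable (k H W)

/-- The left action of (the ambient space of) `N_W` on `H ⊗ W`:
`(φ ⊗ h' ⊗ w') · (h ⊗ w) = h h' ⊗ ⟨φ, w⟩ w'`. -/
def nuNW :
    (Module.Dual k W ⊗[k] (H ⊗[k] W)) ⊗[k] (H ⊗[k] W) →ₗ[k] H ⊗[k] W :=
  (TensorProduct.map (mul' k H)
      (((TensorProduct.lid k W).toLinearMap) ∘ₗ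
        (rTensor W (contractLeft k W)) ∘ₗ
        (TensorProduct.assoc k (Module.Dual k W) W W).symm.toLinearMap ∘ₗ
        (lTensor (Module.Dual k W) (TensorProduct.comm k W W).toLinearMap))) ∘ₗ
    (tensorTensorTensorComm k H (Module.Dual k W) H (W ⊗[k] W)).toLinearMap ∘ₗ
    (TensorProduct.map (TensorProduct.comm k (Module.Dual k W) H).toLinearMap
      (TensorProduct.assoc k H W W).toLinearMap) ∘ₗ
    (tensorTensorTensorComm k (Module.Dual k W) (H ⊗[k] W) H W).toLinearMap

/-- The right action of (the ambient space of) `N_W` on `W* ⊗ V` (for `V` a comodule),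
`(φ ⊗ v) · (ψ ⊗ h ⊗ w) = ψ ⊗ ⟨φ, w⟩ (h · v)`, relative to an action `aV` on `V`. -/
def actNW (V : Type*) [AddCommGroup V] [Module k V] (aV : H ⊗[k] V →ₗ[k] V) :
    (Module.Dual k W ⊗[k] V) ⊗[k] (Module.Dual k W ⊗[k] (H ⊗[k] W)) →ₗ[k]
      Module.Dual k W ⊗[k] V :=
  (TensorProduct.rid k (Module.Dual k W ⊗[k] V)).toLinearMap ∘ₗ
    (TensorProduct.map LinearMap.id (contractLeft k W)) ∘ₗ
    (tensorTensorTensorComm k (Module.Dual k W) (Module.Dual k W) V W).toLinearMap ∘ₗ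
    (TensorProduct.map (TensorProduct.comm k (Module.Dual k W)
        (Module.Dual k W)).toLinearMap
      ((rTensor W aV) ∘ₗ (rTensor W (TensorProduct.comm k V H).toLinearMap) ∘ₗ
        (TensorProduct.assoc k V H W).symm.toLinearMap)) ∘ₗ
    (tensorTensorTensorComm k (Module.Dual k W) V (Module.Dual k W)
      (H ⊗[k] W)).toLinearMap

variable {k H W}

/-- Pointwise right `N_W`-action. -/
def actN {V : Type*} [AddCommGroup V] [Module k V] (aV : H ⊗[k] V →ₗ[k] V)
    (x : Module.Dual k W ⊗[k] V) (y : Module.Dual k W ⊗[k] (H ⊗[k] W)) :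
    Module.Dual k W ⊗[k] V :=
  actNW k H W V aV (x ⊗ₜ y)

variable (k H W)

/-- The evaluation map `(W* ⊗ V) ⊗ (H ⊗ W) → V`, `(φ ⊗ v) ⊗ (h ⊗ w) ↦ ⟨φ, w⟩ h·v`. -/
def evNW (V : Type*) [AddCommGroup V] [Module k V] (aV : H ⊗[k] V →ₗ[k] V) :
    (Module.Dual k W ⊗[k] V) ⊗[k] (H ⊗[k] W) →ₗ[k] V :=
  (TensorProduct.rid k V).toLinearMap ∘ₗ
    (TensorProduct.map aV (contractLeft k W)) ∘ₗ
    (tensorTensorTensorComm k H (Module.Dual k W) V W).toLinearMap ∘ₗ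
    (TensorProduct.map (TensorProduct.comm k (Module.Dual k W) H).toLinearMap
      LinearMap.id) ∘ₗ
    (tensorTensorTensorComm k (Module.Dual k W) V H W).toLinearMap

variable {k H W}

/-- The canonical (coevaluation) element `Σᵢ wᵢ* ⊗ wᵢ ∈ W* ⊗ W` for a dual basis. -/
def coevElt : Module.Dual k W ⊗[k] W :=
  (dualTensorHomEquiv k W W).symm LinearMap.id

end NW

section Maps

variable {k H}

/-- The map `H ⊗ W → W̄ ⊗ H`, `h ⊗ w ↦ h₍₁₎ w ⊗ h₍₂₎`. -/
def betaMap (W : Type*) [AddCommGroup W] [Module k W] [Module H W]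
    [IsScalarTower k H W] : H ⊗[k] W →ₗ[k] W ⊗[k] H :=
  rTensor H (actT W) ∘ₗ
    (TensorProduct.assoc k H W H).symm.toLinearMap ∘ₗ
    lTensor H (TensorProduct.comm k H W).toLinearMap ∘ₗ
    (TensorProduct.assoc k H H W).toLinearMap ∘ₗ
    rTensor W (Δ k H)

/-- The inverse map `W̄ ⊗ H → H ⊗ W`, `w ⊗ h ↦ h₍₂₎ ⊗ S⁻¹(h₍₁₎) w`
(where `S'` is the inverse of the antipode). -/
def gammaMap (W : Type*) [AddCommGroup W] [Module k W] [Module H W]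
    [IsScalarTower k H W] (S' : H →ₗ[k] H) : W ⊗[k] H →ₗ[k] H ⊗[k] W :=
  (TensorProduct.comm k W H).toLinearMap ∘ₗ
    rTensor H (actT W) ∘ₗ
    rTensor H (rTensor W S') ∘ₗ
    rTensor H (TensorProduct.comm k W H).toLinearMap ∘ₗ
    (TensorProduct.assoc k W H H).symm.toLinearMap ∘ₗ
    lTensor W (Δ k H)

/-- The map `K : H ⊗ (H ⊗ W) → H ⊗ W`, `a ⊗ (b ⊗ w) ↦ b ⊗ (a · w)`. -/
def swapActMap (W : Type*) [AddCommGroup W] [Module k W] [Module H W]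
    [IsScalarTower k H W] : H ⊗[k] (H ⊗[k] W) →ₗ[k] H ⊗[k] W :=
  lTensor H (actT W) ∘ₗ
    (TensorProduct.assoc k H H W).toLinearMap ∘ₗ
    rTensor W (TensorProduct.comm k H H).toLinearMap ∘ₗ
    (TensorProduct.assoc k H H W).symm.toLinearMap

/-- The map `ψ : H → W* ⊗ (H ⊗ W)`, `ψ(h) = Σᵢ wᵢ* ⊗ h₍₂₎ ⊗ S⁻¹(h₍₁₎) wᵢ`. -/
def psiMap (W : Type*) [AddCommGroup W] [Module k W] [Module H W]
    [IsScalarTower k H W] [Module.Finite k W] [Module.Free k W]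
    (S' : H →ₗ[k] H) : H →ₗ[k] Module.Dual k W ⊗[k] (H ⊗[k] W) :=
  lTensor (Module.Dual k W) (swapActMap W) ∘ₗ
    (TensorProduct.assoc k (Module.Dual k W) H (H ⊗[k] W)).toLinearMap ∘ₗ
    (TensorProduct.map (TensorProduct.comm k H (Module.Dual k W)).toLinearMap
      LinearMap.id) ∘ₗ
    (tensorTensorTensorComm k H H (Module.Dual k W) W).toLinearMap ∘ₗ
    ((TensorProduct.mk k (H ⊗[k] H)
        (Module.Dual k W ⊗[k] W)).flip (coevElt (W := W))) ∘ₗ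
    rTensor H S' ∘ₗ
    (Δ k H)

/-- The map `j : M → W* ⊗ (W ⊗ M)`, `m ↦ Σᵢ wᵢ* ⊗ (wᵢ ⊗ m)`. -/
def jMap (W : Type*) [AddCommGroup W] [Module k W] [Module.Finite k W]
    [Module.Free k W] (M : Type*) [AddCommGroup M] [Module k M] :
    M →ₗ[k] Module.Dual k W ⊗[k] (W ⊗[k] M) :=
  (TensorProduct.assoc k (Module.Dual k W) W M).toLinearMap ∘ₗ
    (TensorProduct.mk k (Module.Dual k W ⊗[k] W) M (coevElt (W := W)))

/-- The map `U ⊗ (H ⊗ X) → H ⊗ (U ⊗ X)`, `u ⊗ (a ⊗ x) ↦ a ⊗ (u ⊗ x)`. -/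
def pushOut (U X : Type*) [AddCommGroup U] [Module k U] [AddCommGroup X]
    [Module k X] : U ⊗[k] (H ⊗[k] X) →ₗ[k] H ⊗[k] (U ⊗[k] X) :=
  (TensorProduct.assoc k H U X).toLinearMap ∘ₗ
    rTensor X (TensorProduct.comm k U H).toLinearMap ∘ₗ
    (TensorProduct.assoc k U H X).symm.toLinearMap

/-- The map `H ⊗ (U ⊗ X) → U ⊗ (H ⊗ X)`, `a ⊗ (u ⊗ x) ↦ u ⊗ (a ⊗ x)`. -/
def pullIn (U X : Type*) [AddCommGroup U] [Module k U] [AddCommGroup X]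
    [Module k X] : H ⊗[k] (U ⊗[k] X) →ₗ[k] U ⊗[k] (H ⊗[k] X) :=
  (TensorProduct.assoc k U H X).toLinearMap ∘ₗ
    rTensor X (TensorProduct.comm k H U).toLinearMap ∘ₗ
    (TensorProduct.assoc k H U X).symm.toLinearMap

end Maps

section EndAlg

variable {k H}
variable (W : Type*) [AddCommGroup W] [Module k W] [Module H W] [IsScalarTower k H W]

/-- The action of `H` on `W` as an algebra map `H → End_k W`. -/
def actEnd : H →ₗ[k] Module.End k W := (Algebra.lsmul k k W).toLinearMap

/-- The `H`-module structure on `(End^{H_R}(W))ᵒᵖ`: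
`(h · α)(w) = h₍₂₎ α (S⁻¹(h₍₁₎) w)`. -/
def endAct (S' : H →ₗ[k] H) : H →ₗ[k] Module.End k W →ₗ[k] Module.End k W :=
  TensorProduct.lift
    (((llcomp k (Module.End k W) (Module.End k W) (Module.End k W)) ∘ₗ
        ((llcomp k W W W) ∘ₗ (actEnd W))).flip ∘ₗ
      (((llcomp k W W W).flip) ∘ₗ (actEnd W) ∘ₗ S')) ∘ₗ
    (Δ k H)

end EndAlg

section Smash

variable (B : Type*) [AddCommGroup B] [Module k B]

/-- The smash product multiplication on `B ⊗ H`, for a multiplication `mulB` on `B`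
and an `H`-action `aB` on `B`: `(a ⊗ h)(b ⊗ g) = a (h₍₁₎ · b) ⊗ h₍₂₎ g`. -/
def smashMul (mulB : B ⊗[k] B →ₗ[k] B) (aB : H ⊗[k] B →ₗ[k] B) :
    (B ⊗[k] H) ⊗[k] (B ⊗[k] H) →ₗ[k] B ⊗[k] H :=
  (TensorProduct.map
      (mulB ∘ₗ lTensor B aB ∘ₗ (TensorProduct.assoc k B H B).toLinearMap)
      (mul' k H)) ∘ₗ
    (tensorTensorTensorComm k (B ⊗[k] H) H B H).toLinearMap ∘ₗ
    (TensorProduct.map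
      ((TensorProduct.assoc k B H H).symm.toLinearMap ∘ₗ lTensor B (Δ k H))
      LinearMap.id)

/-- The multiplication on (the ambient space of) `W* □_D W = (End^{H_R} W)ᵒᵖ`:
`(φ ⊗ w)(ψ ⊗ v) = ⟨ψ, w⟩ φ ⊗ v`. -/
def muEndOp (W : Type*) [AddCommGroup W] [Module k W] :
    (Module.Dual k W ⊗[k] W) ⊗[k] (Module.Dual k W ⊗[k] W) →ₗ[k]
      Module.Dual k W ⊗[k] W :=
  (TensorProduct.rid k (Module.Dual k W ⊗[k] W)).toLinearMap ∘ₗ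
    (TensorProduct.map LinearMap.id
      ((contractLeft k W) ∘ₗ (TensorProduct.comm k W (Module.Dual k W)).toLinearMap)) ∘ₗ
    (tensorTensorTensorComm k (Module.Dual k W) W W (Module.Dual k W)).toLinearMap ∘ₗ
    (TensorProduct.map LinearMap.id (TensorProduct.comm k (Module.Dual k W) W).toLinearMap)

end Smash

section DualAlg

/-- The convolution product on `H*`: `(f * g)(x) = f(x₍₁₎) g(x₍₂₎)`. -/
def conv (f g : Module.Dual k H) : Module.Dual k H :=
  (mul' k k) ∘ₗ (TensorProduct.map f g) ∘ₗ (Δ k H)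

/-- The hit action `h ⇀ f`, `(h ⇀ f)(x) = f(x h)`. -/
def hitL (h : H) (f : Module.Dual k H) : Module.Dual k H :=
  f ∘ₗ (LinearMap.mulRight k h)

/-- The hit action `f ↼ h`, `(f ↼ h)(x) = f(h x)`. -/
def hitR (f : Module.Dual k H) (h : H) : Module.Dual k H :=
  f ∘ₗ (LinearMap.mulLeft k h)

/-- The left `H`-module structure `⇀⇀` on `(H_R)* = H*`:
`⟨h ⇀⇀ f, x⟩ = f(S(h) ·ad x)`. -/
def hitAd (h : H) (f : Module.Dual k H) : Module.Dual k H :=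
  f ∘ₗ (adT k H) ∘ₗ (TensorProduct.mk k H H (S k H h))

variable (R : H ⊗[k] H)

/-- The map `Φ : (H_R)* → H_R`, `Φ(f) = ⟨f, S(R₂² R₁¹)⟩ R₂¹ R₁²  = (f ⊗ id)(u)`. -/
def PhiMap : Module.Dual k H →ₗ[k] H :=
  (TensorProduct.lid k H).toLinearMap ∘ₗ
    (LinearMap.applyₗ (uElt k H R)) ∘ₗ
    (rTensorHom (R := k) H)

/-- The multiplication `*_R` of the dual Hopf algebra `(H_R)*`:
`f *_R g = (S(R₁² R₂²) ⇀ g) * (S(R₂¹) ⇀ f ↼ R₁¹)`, i.e.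
`(f *_R g)(x) = Σ g(x₍₁₎ S(R₁² R₂²)) f(R₁¹ x₍₂₎ S(R₂¹))`. -/
def mulRAux (f g : Module.Dual k H) :
    ((H ⊗[k] H) ⊗[k] (H ⊗[k] H)) ⊗[k] (H ⊗[k] H) →ₗ[k] k :=
  (mul' k k) ∘ₗ
    (TensorProduct.map
      (g ∘ₗ (mul' k H) ∘ₗ lTensor H ((S k H) ∘ₗ (mul' k H)))
      (f ∘ₗ (mul' k H) ∘ₗ
        (TensorProduct.map (mul' k H) (S k H)))) ∘ₗ
    (TensorProduct.map
      (TensorProduct.comm k (H ⊗[k] H) H).toLinearMap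
      ((TensorProduct.assoc k H H H).symm.toLinearMap ∘ₗ
        lTensor H (TensorProduct.comm k H H).toLinearMap ∘ₗ
        (TensorProduct.assoc k H H H).toLinearMap)) ∘ₗ
    (tensorTensorTensorComm k (H ⊗[k] H) (H ⊗[k] H) H H).toLinearMap ∘ₗ
    (TensorProduct.map
      ((TensorProduct.comm k (H ⊗[k] H) (H ⊗[k] H)).toLinearMap ∘ₗ
        (tensorTensorTensorComm k H H H H).toLinearMap)
      LinearMap.id)

def mulR (f g : Module.Dual k H) : Module.Dual k H :=
  (mulRAux k H f g) ∘ₗ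
    ((TensorProduct.mk k ((H ⊗[k] H) ⊗[k] (H ⊗[k] H)) (H ⊗[k] H)) (R ⊗ₜ R)) ∘ₗ
    (Δ k H)

/-- The comultiplication of the dual Hopf algebra `(H_R)*`: `f ↦ f₍₂₎ ⊗ f₍₁₎`,
dual to the multiplication of `H_R` (which is that of `H`). -/
def dualComul [Module.Finite k H] : Module.Dual k H →ₗ[k]
    Module.Dual k H ⊗[k] Module.Dual k H :=
  (TensorProduct.comm k (Module.Dual k H) (Module.Dual k H)).toLinearMap ∘ₗ
    (TensorProduct.dualDistribEquiv k H H).symm.toLinearMap ∘ₗ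
    (mul' k H).dualMap

end DualAlg

section More

variable {k H}

/-- The map `W̄ ⊗ W* → H`, `w ⊗ φ ↦ w₍₋₁₎ ⟨φ, w₍₀₎⟩`, for a coaction `ρ` on `W`. -/
def dMap {W : Type*} [AddCommGroup W] [Module k W] (ρ : W →ₗ[k] H ⊗[k] W) :
    W ⊗[k] Module.Dual k W →ₗ[k] H :=
  (TensorProduct.rid k H).toLinearMap ∘ₗ
    lTensor H ((contractLeft k W) ∘ₗ
      (TensorProduct.comm k W (Module.Dual k W)).toLinearMap) ∘ₗ
    (TensorProduct.assoc k H W (Module.Dual k W)).toLinearMap ∘ₗ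
    rTensor (Module.Dual k W) ρ

/-- A Yetter–Drinfeld submodule of `(H, ·ad, Δ)`:
a subspace stable under the adjoint action and under the coaction `Δ`. -/
def IsYDSubmoduleOfH (C : Submodule k H) : Prop :=
  (∀ h : H, ∀ c ∈ C, ad k H h c ∈ C) ∧
    ∀ c ∈ C, Δ k H c ∈ LinearMap.range (lTensor H C.subtype)

/-- An irreducible Yetter–Drinfeld submodule of `(H, ·ad, Δ)`. -/
def IsIrredYDSubmoduleOfH (C : Submodule k H) : Prop :=
  C ≠ ⊥ ∧ IsYDSubmoduleOfH C ∧
    ∀ C' ≤ C, IsYDSubmoduleOfH C' → C' = ⊥ ∨ C' = C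

/-- A linear equivalence intertwining two relative Hopf module structures. -/
def IsYDEquiv {V V' : Type*} [AddCommGroup V] [Module k V] [AddCommGroup V']
    [Module k V'] (aV : H ⊗[k] V →ₗ[k] V) (ρV : V →ₗ[k] H ⊗[k] V)
    (aV' : H ⊗[k] V' →ₗ[k] V') (ρV' : V' →ₗ[k] H ⊗[k] V')
    (e : V ≃ₗ[k] V') : Prop :=
  (e.toLinearMap ∘ₗ aV = aV' ∘ₗ lTensor H e.toLinearMap) ∧
    ρV' ∘ₗ e.toLinearMap = lTensor H e.toLinearMap ∘ₗ ρV

end More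

universe u_rep u_vec

/-- A bundled left `H`-module (over the base field `k`). -/
structure Rep (k : Type*) (H : Type*) [Field k] [Ring H] [HopfAlgebra k H] where
  carrier : Type u_rep
  [isAddCommGroup : AddCommGroup carrier]
  [isModuleBase : Module k carrier]
  [isModuleH : Module H carrier]
  [isTower : IsScalarTower k H carrier]

attribute [instance] Rep.isAddCommGroup Rep.isModuleBase Rep.isModuleH Rep.isTower

/-- A bundled `k`-vector space. -/
structure Vect (k : Type*) [Field k] where
  carrier : Type u_vec
  [isAddCommGroup : AddCommGroup carrier]
  [isModuleBase : Module k carrier]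

attribute [instance] Vect.isAddCommGroup Vect.isModuleBase



section Toolkit

open Coalgebra HopfAlgebra

variable {k : Type*} [Field k] {H : Type*} [Ring H] [HopfAlgebra k H]
variable {X : Type*} [AddCommMonoid X] [Module k X]

lemma sum_repr_tri (F : H ⊗[k] (H ⊗[k] H) →ₗ[k] X) {a : H} (r : Coalgebra.Repr k a (H × H))
    (a₁ : ∀ i, Coalgebra.Repr k (r.left i) (H × H)) (a₂ : ∀ i, Coalgebra.Repr k (r.right i) (H × H)) :
    ∑ i ∈ r.index, ∑ j ∈ (a₁ i).index,
      F ((a₁ i).left j ⊗ₜ ((a₁ i).right j ⊗ₜ r.right i)) =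
    ∑ i ∈ r.index, ∑ j ∈ (a₂ i).index,
      F (r.left i ⊗ₜ ((a₂ i).left j ⊗ₜ (a₂ i).right j)) := by
  have := congrArg F (sum_tmul_tmul_eq (R := k) r a₁ a₂)
  simpa [map_sum] using this

lemma sum_counit_smul_left' {a : H} (r : Coalgebra.Repr k a (H × H)) :
    ∑ i ∈ r.index, counit (R := k) (r.left i) • r.right i = a := by
  have := congrArg (TensorProduct.lid k H) (sum_counit_tmul_eq (R := k) r)
  rw [map_sum] at this
  simp only [TensorProduct.lid_tmul] at this
  simpa using this

lemma sum_counit_smul_right' {a : H} (r : Coalgebra.Repr k a (H × H)) :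
    ∑ i ∈ r.index, counit (R := k) (r.right i) • r.left i = a := by
  have := congrArg (TensorProduct.rid k H) (sum_tmul_counit_eq (R := k) r)
  rw [map_sum] at this
  simp only [TensorProduct.rid_tmul] at this
  simpa using this

lemma sum_mixed (x y : H) (rx : Coalgebra.Repr k x (H × H)) (ry : Coalgebra.Repr k y (H × H)) :
    ∑ p ∈ rx.index, ∑ q ∈ ry.index,
      (rx.left p * ry.left q) * antipode (R := k) (rx.right p * ry.right q) =
      algebraMap k H (counit (R := k) x * counit (R := k) y) := by
  have key := mul_antipode_lTensor_comul_apply (R := k) (x * y)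
  rw [Bialgebra.counit_mul] at key
  rw [← key]
  have hcm : comul (R := k) (x * y) =
      ∑ p ∈ rx.index, ∑ q ∈ ry.index,
        (rx.left p * ry.left q) ⊗ₜ[k] (rx.right p * ry.right q) := by
    rw [Bialgebra.comul_mul, ← rx.eq, ← ry.eq, Finset.sum_mul_sum]
    simp [Algebra.TensorProduct.tmul_mul_tmul]
  rw [hcm]
  simp [map_sum, LinearMap.mul'_apply]

lemma amult_step1 (a b : H) (rb : Coalgebra.Repr k b (H × H))
    (rb2 : ∀ j, Coalgebra.Repr k (rb.right j) (H × H)) :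
    ∑ j ∈ rb.index, ∑ q ∈ (rb2 j).index,
      antipode (R := k) (rb.left j) *
        ((rb2 j).left q * antipode (R := k) (a * (rb2 j).right q)) =
    antipode (R := k) (a * b) := by
  set Sa : H →ₗ[k] H := antipode (R := k) with hSa
  set F : H ⊗[k] (H ⊗[k] H) →ₗ[k] H :=
    mul' k H ∘ₗ rTensor H Sa ∘ₗ
      lTensor H (mul' k H ∘ₗ lTensor H (Sa ∘ₗ mulLeft k a)) with hF
  have hFapp : ∀ x y z : H, F (x ⊗ₜ (y ⊗ₜ z)) = Sa x * (y * Sa (a * z)) := by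
    intro x y z; simp [hF, mul'_apply]
  have tri := sum_repr_tri F rb (fun j => ℛ k (rb.left j)) rb2
  simp only [hFapp] at tri
  rw [← tri]
  have inner : ∀ j ∈ rb.index,
      ∑ q ∈ (ℛ k (rb.left j)).index,
        Sa ((ℛ k (rb.left j)).left q) *
          ((ℛ k (rb.left j)).right q * Sa (a * rb.right j)) =
      counit (R := k) (rb.left j) • Sa (a * rb.right j) := by
    intro j _
    simp only [← mul_assoc, ← Finset.sum_mul]
    rw [sum_antipode_mul_eq_algebraMap_counit (ℛ k (rb.left j)), ← Algebra.smul_def]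
  rw [Finset.sum_congr rfl inner]
  have : ∀ j, counit (R := k) (rb.left j) • Sa (a * rb.right j) =
      Sa (a * (counit (R := k) (rb.left j) • rb.right j)) := by
    intro j; rw [mul_smul_comm, map_smul]
  simp only [this]
  rw [← map_sum, ← Finset.mul_sum, sum_counit_smul_left' rb]

lemma amult_step2 (a C L Rq : H) (ra : Coalgebra.Repr k a (H × H))
    (ra2 : ∀ i, Coalgebra.Repr k (ra.right i) (H × H)) :
    ∑ i ∈ ra.index, ∑ p ∈ (ra2 i).index,
      (C * antipode (R := k) (ra.left i)) *
        ((ra2 i).left p * (L * antipode (R := k) ((ra2 i).right p * Rq))) =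
    C * (L * antipode (R := k) (a * Rq)) := by
  set Sa : H →ₗ[k] H := antipode (R := k) with hSa
  set F : H ⊗[k] (H ⊗[k] H) →ₗ[k] H :=
    mul' k H ∘ₗ rTensor H (mulLeft k C ∘ₗ Sa) ∘ₗ
      lTensor H (mul' k H ∘ₗ lTensor H (mulLeft k L ∘ₗ Sa ∘ₗ mulRight k Rq)) with hF
  have hFapp : ∀ x y z : H, F (x ⊗ₜ (y ⊗ₜ z)) = (C * Sa x) * (y * (L * Sa (z * Rq))) := by
    intro x y z; simp [hF, mul'_apply]
  have tri := sum_repr_tri F ra (fun i => ℛ k (ra.left i)) ra2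
  simp only [hFapp] at tri
  rw [← tri]
  have inner : ∀ i ∈ ra.index,
      ∑ p ∈ (ℛ k (ra.left i)).index,
        (C * Sa ((ℛ k (ra.left i)).left p)) *
          (((ℛ k (ra.left i)).right p) * (L * Sa (ra.right i * Rq))) =
      counit (R := k) (ra.left i) • (C * (L * Sa (ra.right i * Rq))) := by
    intro i _
    have : ∀ x y : H, (C * Sa x) * (y * (L * Sa (ra.right i * Rq))) =
        C * ((Sa x * y) * (L * Sa (ra.right i * Rq))) := by
      intro x y; noncomm_ring
    simp only [this, ← Finset.sum_mul, ← Finset.mul_sum]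
    rw [sum_antipode_mul_eq_algebraMap_counit (ℛ k (ra.left i)), ← Algebra.smul_def]
    rw [mul_smul_comm]
  rw [Finset.sum_congr rfl inner]
  have : ∀ i, counit (R := k) (ra.left i) • (C * (L * Sa (ra.right i * Rq))) =
      C * (L * Sa ((counit (R := k) (ra.left i) • ra.right i) * Rq)) := by
    intro i
    rw [smul_mul_assoc, map_smul, mul_smul_comm, mul_smul_comm]
  simp only [this]
  rw [← Finset.mul_sum, ← Finset.mul_sum, ← map_sum, ← Finset.sum_mul, sum_counit_smul_left' ra]

theorem antipode_mul_anti (a b : H) :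
    antipode (R := k) (a * b) = antipode (R := k) b * antipode (R := k) a := by
  set Sa : H →ₗ[k] H := antipode (R := k) with hSa
  let ra := ℛ k a; let rb := ℛ k b
  let ra2 : ∀ i, Coalgebra.Repr k (ra.right i) (H × H) := fun i => ℛ k (ra.right i)
  let rb2 : ∀ j, Coalgebra.Repr k (rb.right j) (H × H) := fun j => ℛ k (rb.right j)
  rw [← amult_step1 a b rb rb2]
  have e2 : ∀ j ∈ rb.index, ∀ q ∈ (rb2 j).index,
      Sa (rb.left j) * ((rb2 j).left q * Sa (a * (rb2 j).right q)) =
      ∑ i ∈ ra.index, ∑ p ∈ (ra2 i).index,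
        (Sa (rb.left j) * Sa (ra.left i)) *
          ((ra2 i).left p * ((rb2 j).left q * Sa ((ra2 i).right p * (rb2 j).right q))) := by
    intro j _ q _
    rw [amult_step2 a (Sa (rb.left j)) ((rb2 j).left q) ((rb2 j).right q) ra ra2]
  calc
    ∑ j ∈ rb.index, ∑ q ∈ (rb2 j).index,
        Sa (rb.left j) * ((rb2 j).left q * Sa (a * (rb2 j).right q))
      = ∑ j ∈ rb.index, ∑ q ∈ (rb2 j).index, ∑ i ∈ ra.index, ∑ p ∈ (ra2 i).index,
          (Sa (rb.left j) * Sa (ra.left i)) *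
            ((ra2 i).left p * ((rb2 j).left q *
              Sa ((ra2 i).right p * (rb2 j).right q))) := by
        refine Finset.sum_congr rfl fun j hj => Finset.sum_congr rfl fun q hq => ?_
        exact e2 j hj q hq
    _ = ∑ j ∈ rb.index, ∑ i ∈ ra.index,
          (Sa (rb.left j) * Sa (ra.left i)) *
            (∑ p ∈ (ra2 i).index, ∑ q ∈ (rb2 j).index,
              ((ra2 i).left p * (rb2 j).left q) *
                Sa ((ra2 i).right p * (rb2 j).right q)) := by
        refine Finset.sum_congr rfl fun j hj => ?_
        rw [Finset.sum_comm]
        refine Finset.sum_congr rfl fun i hi => ?_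
        rw [Finset.mul_sum]
        rw [Finset.sum_comm]
        refine Finset.sum_congr rfl fun p hp => ?_
        rw [Finset.mul_sum]
        refine Finset.sum_congr rfl fun q hq => ?_
        noncomm_ring
    _ = ∑ j ∈ rb.index, ∑ i ∈ ra.index,
          (counit (R := k) (ra.right i) * counit (R := k) (rb.right j)) •
            (Sa (rb.left j) * Sa (ra.left i)) := by
        refine Finset.sum_congr rfl fun j hj => Finset.sum_congr rfl fun i hi => ?_
        rw [sum_mixed (ra.right i) (rb.right j) (ra2 i) (rb2 j)]
        rw [Algebra.smul_def, ← Algebra.commutes]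
    _ = Sa b * Sa a := by
        have h1 : ∀ (j : rb.ι) (i : ra.ι),
            (counit (R := k) (ra.right i) * counit (R := k) (rb.right j)) •
              (Sa (rb.left j) * Sa (ra.left i)) =
            (counit (R := k) (rb.right j) • Sa (rb.left j)) *
              (counit (R := k) (ra.right i) • Sa (ra.left i)) := by
          intro j i
          rw [smul_mul_smul_comm, mul_comm (counit (R := k) (rb.right j))]
        simp only [h1]
        rw [← Finset.sum_mul_sum]
        have hb : ∑ j ∈ rb.index, counit (R := k) (rb.right j) • Sa (rb.left j) = Sa b := by
          simp only [← map_smul]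
          rw [← map_sum, sum_counit_smul_right' rb]
        have ha : ∑ i ∈ ra.index, counit (R := k) (ra.right i) • Sa (ra.left i) = Sa a := by
          simp only [← map_smul]
          rw [← map_sum, sum_counit_smul_right' ra]
        rw [hb, ha]

lemma sum_repr_quad (F : H ⊗[k] (H ⊗[k] (H ⊗[k] H)) →ₗ[k] X) {h : H}
    (r : Coalgebra.Repr k h (H × H))
    (r1 : ∀ i, Coalgebra.Repr k (r.left i) (H × H)) (r2 : ∀ i, Coalgebra.Repr k (r.right i) (H × H))
    (r3 : ∀ i j, Coalgebra.Repr k ((r2 i).left j) (H × H)) :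
    ∑ i ∈ r.index, ∑ t ∈ (r1 i).index, ∑ j ∈ (r2 i).index,
      F ((r1 i).left t ⊗ₜ ((r1 i).right t ⊗ₜ ((r2 i).left j ⊗ₜ (r2 i).right j))) =
    ∑ i ∈ r.index, ∑ j ∈ (r2 i).index, ∑ p ∈ (r3 i j).index,
      F (r.left i ⊗ₜ ((r3 i j).left p ⊗ₜ ((r3 i j).right p ⊗ₜ (r2 i).right j))) := by
  have hL : ∀ i ∈ r.index, ∀ t ∈ (r1 i).index,
      ∑ j ∈ (r2 i).index,
        F ((r1 i).left t ⊗ₜ ((r1 i).right t ⊗ₜ ((r2 i).left j ⊗ₜ (r2 i).right j))) =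
      (F ∘ₗ lTensor H (lTensor H (Coalgebra.comul (R := k))))
        ((r1 i).left t ⊗ₜ ((r1 i).right t ⊗ₜ r.right i)) := by
    intro i _ t _
    simp only [coe_comp, Function.comp_apply, lTensor_tmul]
    rw [← (r2 i).eq]
    simp [tmul_sum, map_sum]
  have tri := sum_repr_tri (F ∘ₗ lTensor H (lTensor H (Coalgebra.comul (R := k)))) r r1 r2
  have inner : ∀ i ∈ r.index,
      ∑ j ∈ (r2 i).index,
        (F ∘ₗ lTensor H (lTensor H (Coalgebra.comul (R := k))))
          (r.left i ⊗ₜ ((r2 i).left j ⊗ₜ (r2 i).right j)) =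
      ∑ j ∈ (r2 i).index, ∑ p ∈ (r3 i j).index,
        F (r.left i ⊗ₜ ((r3 i j).left p ⊗ₜ ((r3 i j).right p ⊗ₜ (r2 i).right j))) := by
    intro i _
    have tri2 := sum_repr_tri (F ∘ₗ TensorProduct.mk k H (H ⊗[k] (H ⊗[k] H)) (r.left i))
      (r2 i) (r3 i) (fun j => ℛ k ((r2 i).right j))
    simp only [coe_comp, Function.comp_apply, TensorProduct.mk_apply] at tri2
    rw [tri2]
    refine Finset.sum_congr rfl fun j _ => ?_
    simp only [coe_comp, Function.comp_apply, lTensor_tmul]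
    rw [← (ℛ k ((r2 i).right j)).eq]
    simp [tmul_sum, map_sum]
  calc
    ∑ i ∈ r.index, ∑ t ∈ (r1 i).index, ∑ j ∈ (r2 i).index,
        F ((r1 i).left t ⊗ₜ ((r1 i).right t ⊗ₜ ((r2 i).left j ⊗ₜ (r2 i).right j)))
      = ∑ i ∈ r.index, ∑ t ∈ (r1 i).index,
          (F ∘ₗ lTensor H (lTensor H (Coalgebra.comul (R := k))))
            ((r1 i).left t ⊗ₜ ((r1 i).right t ⊗ₜ r.right i)) := by
        exact Finset.sum_congr rfl fun i hi => Finset.sum_congr rfl fun t ht => hL i hi t ht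
    _ = ∑ i ∈ r.index, ∑ j ∈ (r2 i).index,
          (F ∘ₗ lTensor H (lTensor H (Coalgebra.comul (R := k))))
            (r.left i ⊗ₜ ((r2 i).left j ⊗ₜ (r2 i).right j)) := tri
    _ = _ := Finset.sum_congr rfl fun i hi => inner i hi

lemma antipode_one' : antipode (R := k) (A := H) 1 = 1 := by
  have := mul_antipode_rTensor_comul_apply (R := k) (A := H) 1
  simpa [Algebra.TensorProduct.one_def] using this

lemma antipode_algebraMap' (c : k) :
    antipode (R := k) (algebraMap k H c) = algebraMap k H c := by
  rw [Algebra.algebraMap_eq_smul_one, map_smul, antipode_one']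

section Sinv
variable (S' : H →ₗ[k] H) (hS'l : ∀ x : H, S' (antipode (R := k) x) = x)
  (hS'r : ∀ x : H, antipode (R := k) (S' x) = x)

include hS'l in
lemma S_inj {x y : H} (hxy : antipode (R := k) x = antipode (R := k) y) : x = y := by
  rw [← hS'l x, hxy, hS'l y]

include hS'l hS'r in
lemma sum_Sinv_mul {h : H} (r : Coalgebra.Repr k h (H × H)) :
    ∑ i ∈ r.index, S' (r.right i) * r.left i = algebraMap k H (counit (R := k) h) := by
  refine S_inj S' hS'l ?_
  rw [map_sum, antipode_algebraMap']
  calc ∑ i ∈ r.index, antipode (R := k) (S' (r.right i) * r.left i)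
      = ∑ i ∈ r.index, antipode (R := k) (r.left i) * r.right i := by
        refine Finset.sum_congr rfl fun i _ => ?_
        rw [antipode_mul_anti, hS'r]
    _ = algebraMap k H (counit (R := k) h) := sum_antipode_mul_eq_algebraMap_counit r

include hS'l hS'r in
lemma sum_mul_Sinv {h : H} (r : Coalgebra.Repr k h (H × H)) :
    ∑ i ∈ r.index, r.right i * S' (r.left i) = algebraMap k H (counit (R := k) h) := by
  refine S_inj S' hS'l ?_
  rw [map_sum, antipode_algebraMap']
  calc ∑ i ∈ r.index, antipode (R := k) (r.right i * S' (r.left i))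
      = ∑ i ∈ r.index, r.left i * antipode (R := k) (r.right i) := by
        refine Finset.sum_congr rfl fun i _ => ?_
        rw [antipode_mul_anti, hS'r]
    _ = algebraMap k H (counit (R := k) h) := sum_mul_antipode_eq_algebraMap_counit r

end Sinv

lemma comm_mul' (x y : H ⊗[k] H) :
    (TensorProduct.comm k H H) (x * y) =
      (TensorProduct.comm k H H) x * (TensorProduct.comm k H H) y := by
  induction x using TensorProduct.induction_on with
  | zero => simp
  | tmul a b =>
    induction y using TensorProduct.induction_on with
    | zero => simp
    | tmul c d => simp [Algebra.TensorProduct.tmul_mul_tmul]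
    | add y₁ y₂ h1 h2 => simp [mul_add, h1, h2]
  | add x₁ x₂ h1 h2 => simp [add_mul, h1, h2]

lemma comm_comm' (x : H ⊗[k] H) :
    (TensorProduct.comm k H H) ((TensorProduct.comm k H H) x) = x := by
  induction x using TensorProduct.induction_on with
  | zero => simp
  | tmul a b => simp
  | add x₁ x₂ h1 h2 => simp [h1, h2]

end Toolkit


section MainAux

open Coalgebra HopfAlgebra

variable {k : Type*} [Field k] {H : Type*} [Ring H] [HopfAlgebra k H]
variable {W : Type*} [AddCommGroup W] [Module k W] [Module H W] [IsScalarTower k H W]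

/-- `h ↦ h • w` as a `k`-linear map. -/
def smulW (w : W) : H →ₗ[k] W :=
  actT (k := k) (H := H) W ∘ₗ (TensorProduct.mk k H W).flip w

@[simp] lemma actT_tmul (h : H) (w : W) : actT (k := k) (H := H) W (h ⊗ₜ w) = h • w := by
  simp [actT]

@[simp] lemma smulW_apply (w : W) (h : H) : smulW (k := k) w h = h • w := by
  simp [smulW]

lemma betaMap_tmul (h : H) (w : W) :
    betaMap (k := k) (H := H) W (h ⊗ₜ w) = rTensor H (smulW w) (Δ k H h) := by
  unfold betaMap
  simp only [coe_comp, Function.comp_apply, rTensor_tmul, LinearEquiv.coe_coe]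
  induction Δ k H h using TensorProduct.induction_on with
  | zero => simp
  | tmul a b => simp
  | add x y hx hy => simp [add_tmul, hx, hy]

lemma gammaMap_tmul (S' : H →ₗ[k] H) (w : W) (h : H) :
    gammaMap (k := k) (H := H) W S' (w ⊗ₜ h) =
      (TensorProduct.comm k W H) (rTensor H (smulW w ∘ₗ S') (Δ k H h)) := by
  unfold gammaMap
  simp only [coe_comp, Function.comp_apply, lTensor_tmul, LinearEquiv.coe_coe]
  induction Δ k H h using TensorProduct.induction_on with
  | zero => simp
  | tmul a b => simp
  | add x y hx hy => simp [tmul_add, hx, hy]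


section Part12

variable (S' : H →ₗ[k] H)
  (hS'l : ∀ x : H, S' (S k H x) = x) (hS'r : ∀ x : H, S k H (S' x) = x)

include hS'l hS'r in
lemma gamma_beta_id :
    gammaMap (k := k) (H := H) W S' ∘ₗ betaMap (k := k) (H := H) W = LinearMap.id := by
  apply TensorProduct.ext'
  intro h w
  simp only [coe_comp, Function.comp_apply, id_coe, id_eq]
  rw [betaMap_tmul]
  set r := ℛ k h with hr
  rw [← r.eq, map_sum, map_sum]
  simp only [rTensor_tmul, smulW_apply]
  set r1 : ∀ i, Coalgebra.Repr k (r.left i) (H × H) := fun i => ℛ k (r.left i) with hr1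
  set r2 : ∀ i, Coalgebra.Repr k (r.right i) (H × H) := fun i => ℛ k (r.right i) with hr2
  have hg : ∀ i ∈ r.index,
      gammaMap (k := k) (H := H) W S' ((r.left i • w) ⊗ₜ r.right i) =
        ∑ j ∈ (r2 i).index,
          (r2 i).right j ⊗ₜ[k] ((S' ((r2 i).left j) * r.left i) • w) := by
    intro i _
    rw [gammaMap_tmul, ← (r2 i).eq, map_sum, map_sum]
    simp [mul_smul]
  rw [Finset.sum_congr rfl hg]
  set F : H ⊗[k] (H ⊗[k] H) →ₗ[k] H ⊗[k] W :=
    lTensor H (smulW w ∘ₗ mul' k H ∘ₗ (TensorProduct.comm k H H).toLinearMap) ∘ₗ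
      (TensorProduct.comm k (H ⊗[k] H) H).toLinearMap ∘ₗ
      (TensorProduct.assoc k H H H).symm.toLinearMap ∘ₗ
      lTensor H (rTensor H S') with hF
  have hFapp : ∀ x y z : H, F (x ⊗ₜ (y ⊗ₜ z)) = z ⊗ₜ[k] ((S' y * x) • w) := by
    intro x y z; simp [hF, mul'_apply]
  have tri := sum_repr_tri F r r1 r2
  simp only [hFapp] at tri
  rw [← tri]
  have inner : ∀ i ∈ r.index,
      ∑ j ∈ (r1 i).index,
        r.right i ⊗ₜ[k] ((S' ((r1 i).right j) * (r1 i).left j) • w) =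
      counit (R := k) (r.left i) • (r.right i ⊗ₜ[k] w) := by
    intro i _
    rw [← tmul_sum, ← Finset.sum_smul, sum_Sinv_mul S' hS'l hS'r (r1 i),
      algebraMap_smul, tmul_smul]
  rw [Finset.sum_congr rfl inner]
  simp only [smul_tmul']
  rw [← sum_tmul, sum_counit_smul_left' r]

include hS'l hS'r in
lemma beta_gamma_id :
    betaMap (k := k) (H := H) W ∘ₗ gammaMap (k := k) (H := H) W S' = LinearMap.id := by
  apply TensorProduct.ext'
  intro w h
  simp only [coe_comp, Function.comp_apply, id_coe, id_eq]
  rw [gammaMap_tmul]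
  set r := ℛ k h with hr
  rw [← r.eq, map_sum, map_sum]
  simp only [rTensor_tmul, coe_comp, Function.comp_apply, smulW_apply, TensorProduct.comm_tmul]
  rw [map_sum]
  set r1 : ∀ i, Coalgebra.Repr k (r.left i) (H × H) := fun i => ℛ k (r.left i) with hr1
  set r2 : ∀ i, Coalgebra.Repr k (r.right i) (H × H) := fun i => ℛ k (r.right i) with hr2
  have hg : ∀ i ∈ r.index,
      betaMap (k := k) (H := H) W (r.right i ⊗ₜ (S' (r.left i) • w)) =
        ∑ j ∈ (r2 i).index,
          (((r2 i).left j * S' (r.left i)) • w) ⊗ₜ[k] (r2 i).right j := by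
    intro i _
    rw [betaMap_tmul, ← (r2 i).eq, map_sum]
    simp [mul_smul]
  rw [Finset.sum_congr rfl hg]
  set F : H ⊗[k] (H ⊗[k] H) →ₗ[k] W ⊗[k] H :=
    rTensor H (smulW w ∘ₗ mul' k H ∘ₗ (TensorProduct.comm k H H).toLinearMap) ∘ₗ
      (TensorProduct.assoc k H H H).symm.toLinearMap ∘ₗ
      rTensor (H ⊗[k] H) S' with hF
  have hFapp : ∀ x y z : H, F (x ⊗ₜ (y ⊗ₜ z)) = ((y * S' x) • w) ⊗ₜ[k] z := by
    intro x y z; simp [hF, mul'_apply]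
  have tri := sum_repr_tri F r r1 r2
  simp only [hFapp] at tri
  rw [← tri]
  have inner : ∀ i ∈ r.index,
      ∑ j ∈ (r1 i).index,
        (((r1 i).right j * S' ((r1 i).left j)) • w) ⊗ₜ[k] r.right i =
      counit (R := k) (r.left i) • (w ⊗ₜ[k] r.right i) := by
    intro i _
    rw [← sum_tmul, ← Finset.sum_smul, sum_mul_Sinv S' hS'l hS'r (r1 i),
      algebraMap_smul, smul_tmul']
  rw [Finset.sum_congr rfl inner]
  have : ∀ i ∈ r.index, counit (R := k) (r.left i) • (w ⊗ₜ[k] r.right i) =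
      w ⊗ₜ[k] (counit (R := k) (r.left i) • r.right i) := by
    intro i _; rw [tmul_smul]
  rw [Finset.sum_congr rfl this, ← tmul_sum, sum_counit_smul_left' r]

end Part12


lemma beta_module_map :
    betaMap (k := k) (H := H) W ∘ₗ regAct (k := k) (H := H) W =
      diagAct (actT (k := k) (H := H) W) (actT (k := k) (H := H) H) ∘ₗ
        lTensor H (betaMap (k := k) (H := H) W) := by
  apply TensorProduct.ext'
  intro g y
  simp only [coe_comp, Function.comp_apply, lTensor_tmul]
  induction y using TensorProduct.induction_on with
  | zero => simp
  | add y₁ y₂ h₁ h₂ => simp only [tmul_add, map_add] at h₁ h₂ ⊢; rw [h₁, h₂]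
  | tmul h w =>
    have hreg : regAct (k := k) (H := H) W (g ⊗ₜ (h ⊗ₜ w)) = (g * h) ⊗ₜ w := by
      simp [regAct, mul'_apply]
    rw [hreg, betaMap_tmul, betaMap_tmul]
    have hdiag : ∀ y : W ⊗[k] H,
        diagAct (actT (k := k) (H := H) W) (actT (k := k) (H := H) H) (g ⊗ₜ y) =
          ((TensorProduct.map (actT (k := k) (H := H) W) (actT (k := k) (H := H) H)) ∘ₗ
            (tensorTensorTensorComm k H H W H).toLinearMap) (Δ k H g ⊗ₜ y) := by
      intro y; simp [diagAct]
    rw [hdiag, Bialgebra.comul_mul]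
    generalize Δ k H g = s
    generalize Δ k H h = t
    induction s using TensorProduct.induction_on with
    | zero => simp only [zero_mul, map_zero, zero_tmul]
    | add s₁ s₂ h₁ h₂ => simp only [add_mul, map_add, add_tmul] at h₁ h₂ ⊢; rw [h₁, h₂]
    | tmul a b =>
      induction t using TensorProduct.induction_on with
      | zero => simp only [mul_zero, map_zero, tmul_zero]
      | add t₁ t₂ h₁ h₂ => simp only [mul_add, map_add, tmul_add] at h₁ h₂ ⊢; rw [h₁, h₂]
      | tmul c d =>
        simp [Algebra.TensorProduct.tmul_mul_tmul, mul_smul, smul_eq_mul]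

lemma Qcom (R : H ⊗[k] H)
    (hcc : ∀ h : H, R * Δ k H h = (TensorProduct.comm k H H) (Δ k H h) * R) (x : H) :
    ((TensorProduct.comm k H H) R * R) * Δ k H x =
      Δ k H x * ((TensorProduct.comm k H H) R * R) := by
  calc ((TensorProduct.comm k H H) R * R) * Δ k H x
      = (TensorProduct.comm k H H) R * (R * Δ k H x) := by rw [mul_assoc]
    _ = (TensorProduct.comm k H H) R * ((TensorProduct.comm k H H) (Δ k H x) * R) := by
        rw [hcc]
    _ = ((TensorProduct.comm k H H) R * (TensorProduct.comm k H H) (Δ k H x)) * R := by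
        rw [mul_assoc]
    _ = (TensorProduct.comm k H H) (R * Δ k H x) * R := by rw [comm_mul']
    _ = (TensorProduct.comm k H H) ((TensorProduct.comm k H H) (Δ k H x) * R) * R := by
        rw [hcc]
    _ = ((TensorProduct.comm k H H) ((TensorProduct.comm k H H) (Δ k H x)) *
          (TensorProduct.comm k H H) R) * R := by rw [comm_mul']
    _ = (Δ k H x * (TensorProduct.comm k H H) R) * R := by rw [comm_comm']
    _ = Δ k H x * ((TensorProduct.comm k H H) R * R) := by rw [mul_assoc]

end MainAux





set_option synthInstance.maxHeartbeats 400000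
set_option maxHeartbeats 1000000


section Part4

open Coalgebra HopfAlgebra

variable {k : Type*} [Field k] {H : Type*} [Ring H] [HopfAlgebra k H]
variable {W : Type*} [AddCommGroup W] [Module k W] [Module H W] [IsScalarTower k H W]

lemma adT_tmul (a p : H) (ra : Coalgebra.Repr k a (H × H)) :
    adT k H (a ⊗ₜ[k] p) = ∑ t ∈ ra.index, ra.left t * (p * S k H (ra.right t)) := by
  unfold adT
  simp only [coe_comp, Function.comp_apply, LinearEquiv.coe_coe]
  have h1 : (rTensor H (Δ k H)) (a ⊗ₜ[k] p) =
      ∑ t ∈ ra.index, (ra.left t ⊗ₜ[k] ra.right t) ⊗ₜ[k] p := by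
    rw [rTensor_tmul, ← ra.eq, sum_tmul]
  rw [h1]
  simp [map_sum, mul'_apply]

/-- `(γ⊗δ)⊗q ↦ (γ⊗q)⊗δ`. -/
def tauMap : (H ⊗[k] H) ⊗[k] H →ₗ[k] (H ⊗[k] H) ⊗[k] H :=
  (TensorProduct.assoc k H H H).symm.toLinearMap ∘ₗ
    lTensor H (TensorProduct.comm k H H).toLinearMap ∘ₗ
    (TensorProduct.assoc k H H H).toLinearMap

@[simp] lemma tauMap_tmul (γ δ q : H) :
    tauMap ((γ ⊗ₜ[k] δ) ⊗ₜ[k] q) = (γ ⊗ₜ[k] q) ⊗ₜ[k] δ := by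
  simp [tauMap]

/-- `(β⊗(γ⊗δ))⊗q ↦ β⊗((γ⊗q)⊗δ)`. -/
def sigmaMap : (H ⊗[k] (H ⊗[k] H)) ⊗[k] H →ₗ[k] H ⊗[k] ((H ⊗[k] H) ⊗[k] H) :=
  lTensor H tauMap ∘ₗ (TensorProduct.assoc k H (H ⊗[k] H) H).toLinearMap

@[simp] lemma sigmaMap_tmul (β γ δ q : H) :
    sigmaMap ((β ⊗ₜ[k] (γ ⊗ₜ[k] δ)) ⊗ₜ[k] q) = β ⊗ₜ[k] ((γ ⊗ₜ[k] q) ⊗ₜ[k] δ) := by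
  simp [sigmaMap]

/-- `(α⊗(β⊗(γ⊗δ)))⊗(p⊗q) ↦ ((α⊗β)⊗p)⊗((γ⊗q)⊗δ)`. -/
def thetaWire : (H ⊗[k] (H ⊗[k] (H ⊗[k] H))) ⊗[k] (H ⊗[k] H) →ₗ[k]
    ((H ⊗[k] H) ⊗[k] H) ⊗[k] ((H ⊗[k] H) ⊗[k] H) :=
  (TensorProduct.assoc k (H ⊗[k] H) H ((H ⊗[k] H) ⊗[k] H)).symm.toLinearMap ∘ₗ
    (tensorTensorTensorComm k H H H ((H ⊗[k] H) ⊗[k] H)).toLinearMap ∘ₗ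
    lTensor (H ⊗[k] H) sigmaMap ∘ₗ
    (tensorTensorTensorComm k H (H ⊗[k] (H ⊗[k] H)) H H).toLinearMap

@[simp] lemma thetaWire_tmul (α β γ δ p q : H) :
    thetaWire ((α ⊗ₜ[k] (β ⊗ₜ[k] (γ ⊗ₜ[k] δ))) ⊗ₜ[k] (p ⊗ₜ[k] q)) =
      ((α ⊗ₜ[k] β) ⊗ₜ[k] p) ⊗ₜ[k] ((γ ⊗ₜ[k] q) ⊗ₜ[k] δ) := by
  simp [thetaWire]

def combL1 : (H ⊗[k] H) ⊗[k] H →ₗ[k] H :=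
  mul' k H ∘ₗ
    lTensor H (mul' k H ∘ₗ (TensorProduct.comm k H H).toLinearMap ∘ₗ rTensor H (S k H)) ∘ₗ
    (TensorProduct.assoc k H H H).toLinearMap

@[simp] lemma combL1_tmul (α β p : H) :
    combL1 ((α ⊗ₜ[k] β) ⊗ₜ[k] p) = α * (p * S k H β) := by
  simp [combL1, mul'_apply]

def combL2 : (H ⊗[k] H) ⊗[k] H →ₗ[k] H :=
  mul' k H ∘ₗ lTensor H (S k H ∘ₗ mul' k H) ∘ₗ (TensorProduct.assoc k H H H).toLinearMap

@[simp] lemma combL2_tmul (α β p : H) :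
    combL2 ((α ⊗ₜ[k] β) ⊗ₜ[k] p) = α * S k H (β * p) := by
  simp [combL2, mul'_apply]

def combL3 : (H ⊗[k] H) ⊗[k] H →ₗ[k] H :=
  mul' k H ∘ₗ lTensor H (mul' k H ∘ₗ TensorProduct.map (S k H) (S k H)) ∘ₗ
    (TensorProduct.assoc k H H H).toLinearMap

@[simp] lemma combL3_tmul (α β p : H) :
    combL3 ((α ⊗ₜ[k] β) ⊗ₜ[k] p) = α * (S k H β * S k H p) := by
  simp [combL3, mul'_apply]

def combR1 : (H ⊗[k] H) ⊗[k] H →ₗ[k] H ⊗[k] H := rTensor H (mul' k H)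

@[simp] lemma combR1_tmul (γ q δ : H) :
    combR1 ((γ ⊗ₜ[k] q) ⊗ₜ[k] δ) = (γ * q) ⊗ₜ[k] δ := by
  simp [combR1, mul'_apply]

def combR3 : (H ⊗[k] H) ⊗[k] H →ₗ[k] H ⊗[k] H :=
  rTensor H (mul' k H ∘ₗ (TensorProduct.comm k H H).toLinearMap)

@[simp] lemma combR3_tmul (γ q δ : H) :
    combR3 ((γ ⊗ₜ[k] q) ⊗ₜ[k] δ) = (q * γ) ⊗ₜ[k] δ := by
  simp [combR3, mul'_apply]

def theta1 : (H ⊗[k] (H ⊗[k] (H ⊗[k] H))) ⊗[k] (H ⊗[k] H) →ₗ[k] H ⊗[k] (H ⊗[k] H) :=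
  TensorProduct.map combL1 combR1 ∘ₗ thetaWire

@[simp] lemma theta1_tmul (α β γ δ p q : H) :
    theta1 ((α ⊗ₜ[k] (β ⊗ₜ[k] (γ ⊗ₜ[k] δ))) ⊗ₜ[k] (p ⊗ₜ[k] q)) =
      (α * (p * S k H β)) ⊗ₜ[k] ((γ * q) ⊗ₜ[k] δ) := by
  simp [theta1]

def theta2 : (H ⊗[k] (H ⊗[k] (H ⊗[k] H))) ⊗[k] (H ⊗[k] H) →ₗ[k] H ⊗[k] (H ⊗[k] H) :=
  TensorProduct.map combL2 combR1 ∘ₗ thetaWire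

@[simp] lemma theta2_tmul (α β γ δ p q : H) :
    theta2 ((α ⊗ₜ[k] (β ⊗ₜ[k] (γ ⊗ₜ[k] δ))) ⊗ₜ[k] (p ⊗ₜ[k] q)) =
      (α * S k H (β * p)) ⊗ₜ[k] ((γ * q) ⊗ₜ[k] δ) := by
  simp [theta2]

def theta3 : (H ⊗[k] (H ⊗[k] (H ⊗[k] H))) ⊗[k] (H ⊗[k] H) →ₗ[k] H ⊗[k] (H ⊗[k] H) :=
  TensorProduct.map combL3 combR3 ∘ₗ thetaWire

@[simp] lemma theta3_tmul (α β γ δ p q : H) :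
    theta3 ((α ⊗ₜ[k] (β ⊗ₜ[k] (γ ⊗ₜ[k] δ))) ⊗ₜ[k] (p ⊗ₜ[k] q)) =
      (α * (S k H β * S k H p)) ⊗ₜ[k] ((q * γ) ⊗ₜ[k] δ) := by
  simp [theta3]

def theta5 : (H ⊗[k] (H ⊗[k] H)) ⊗[k] (H ⊗[k] H) →ₗ[k] H ⊗[k] (H ⊗[k] H) :=
  TensorProduct.map (mul' k H ∘ₗ lTensor H (S k H)) (combR3 ∘ₗ tauMap) ∘ₗ
    (tensorTensorTensorComm k H (H ⊗[k] H) H H).toLinearMap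

@[simp] lemma theta5_tmul (z γ δ p q : H) :
    theta5 ((z ⊗ₜ[k] (γ ⊗ₜ[k] δ)) ⊗ₜ[k] (p ⊗ₜ[k] q)) =
      (z * S k H p) ⊗ₜ[k] ((q * γ) ⊗ₜ[k] δ) := by
  simp [theta5, mul'_apply]

def xiMap : (H ⊗[k] H) ⊗[k] (H ⊗[k] H) →ₗ[k] H ⊗[k] (H ⊗[k] H) :=
  lTensor H (rTensor H (mul' k H)) ∘ₗ
    lTensor H (TensorProduct.assoc k H H H).symm.toLinearMap ∘ₗ
    (TensorProduct.assoc k H H (H ⊗[k] H)).toLinearMap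

@[simp] lemma xiMap_tmul (p q a b : H) :
    xiMap ((p ⊗ₜ[k] q) ⊗ₜ[k] (a ⊗ₜ[k] b)) = p ⊗ₜ[k] ((q * a) ⊗ₜ[k] b) := by
  simp [xiMap, mul'_apply]

def zetaMap : (H ⊗[k] (H ⊗[k] H)) ⊗[k] (H ⊗[k] H) →ₗ[k] H ⊗[k] (H ⊗[k] H) :=
  TensorProduct.map (adT k H) (rTensor H (mul' k H) ∘ₗ tauMap) ∘ₗ
    (tensorTensorTensorComm k H (H ⊗[k] H) H H).toLinearMap

@[simp] lemma zetaMap_tmul (a b c p q : H) :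
    zetaMap ((a ⊗ₜ[k] (b ⊗ₜ[k] c)) ⊗ₜ[k] (p ⊗ₜ[k] q)) =
      adT k H (a ⊗ₜ[k] p) ⊗ₜ[k] ((b * q) ⊗ₜ[k] c) := by
  simp [zetaMap, mul'_apply]

def XiFun (a d : H) : H ⊗[k] H →ₗ[k] H ⊗[k] (H ⊗[k] H) :=
  TensorProduct.map (mulLeft k a ∘ₗ S k H) ((TensorProduct.mk k H H).flip d)

@[simp] lemma XiFun_tmul (a d s t : H) :
    XiFun a d (s ⊗ₜ[k] t) = (a * S k H s) ⊗ₜ[k] (t ⊗ₜ[k] d) := by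
  simp [XiFun]


lemma zeta_expand (a c d : H) (ra : Coalgebra.Repr k a (H × H)) (u' : H ⊗[k] H) :
    zetaMap ((a ⊗ₜ[k] (c ⊗ₜ[k] d)) ⊗ₜ[k] u') =
      ∑ t ∈ ra.index, theta1 ((ra.left t ⊗ₜ[k] (ra.right t ⊗ₜ[k] (c ⊗ₜ[k] d))) ⊗ₜ[k] u') := by
  induction u' using TensorProduct.induction_on with
  | zero => simp only [tmul_zero, map_zero, Finset.sum_const_zero]
  | add y₁ y₂ h₁ h₂ =>
    simp only [tmul_add, map_add, Finset.sum_add_distrib] at h₁ h₂ ⊢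
    rw [h₁, h₂]
  | tmul p q =>
    rw [zetaMap_tmul, adT_tmul a p ra, sum_tmul]
    exact Finset.sum_congr rfl fun t _ => by rw [theta1_tmul]

lemma theta1_to_theta2 (α β γ δ : H) (q' : H ⊗[k] H) :
    theta1 ((α ⊗ₜ[k] (β ⊗ₜ[k] (γ ⊗ₜ[k] δ))) ⊗ₜ[k] rTensor H (S k H) q') =
      theta2 ((α ⊗ₜ[k] (β ⊗ₜ[k] (γ ⊗ₜ[k] δ))) ⊗ₜ[k] q') := by
  induction q' using TensorProduct.induction_on with
  | zero => simp only [map_zero, tmul_zero]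
  | add y₁ y₂ h₁ h₂ => simp only [map_add, tmul_add] at h₁ h₂ ⊢; rw [h₁, h₂]
  | tmul P R =>
    rw [rTensor_tmul, theta1_tmul, theta2_tmul, antipode_mul_anti]

lemma theta2_to_Xi (α β γ δ : H) (q' : H ⊗[k] H) :
    theta2 ((α ⊗ₜ[k] (β ⊗ₜ[k] (γ ⊗ₜ[k] δ))) ⊗ₜ[k] q') =
      XiFun α δ ((β ⊗ₜ[k] γ) * q') := by
  induction q' using TensorProduct.induction_on with
  | zero => simp only [tmul_zero, map_zero, mul_zero]
  | add y₁ y₂ h₁ h₂ => simp only [tmul_add, map_add, mul_add] at h₁ h₂ ⊢; rw [h₁, h₂]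
  | tmul p q =>
    rw [theta2_tmul, Algebra.TensorProduct.tmul_mul_tmul, XiFun_tmul]

lemma Xi_to_theta3 (α β γ δ : H) (q' : H ⊗[k] H) :
    XiFun α δ (q' * (β ⊗ₜ[k] γ)) =
      theta3 ((α ⊗ₜ[k] (β ⊗ₜ[k] (γ ⊗ₜ[k] δ))) ⊗ₜ[k] q') := by
  induction q' using TensorProduct.induction_on with
  | zero => simp only [zero_mul, map_zero, tmul_zero]
  | add y₁ y₂ h₁ h₂ => simp only [add_mul, map_add, tmul_add] at h₁ h₂ ⊢; rw [h₁, h₂]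
  | tmul p q =>
    rw [Algebra.TensorProduct.tmul_mul_tmul, XiFun_tmul, theta3_tmul, antipode_mul_anti]

lemma theta3_to_theta5 (α β γ δ : H) (q' : H ⊗[k] H) :
    theta3 ((α ⊗ₜ[k] (β ⊗ₜ[k] (γ ⊗ₜ[k] δ))) ⊗ₜ[k] q') =
      theta5 (((α * S k H β) ⊗ₜ[k] (γ ⊗ₜ[k] δ)) ⊗ₜ[k] q') := by
  induction q' using TensorProduct.induction_on with
  | zero => simp only [tmul_zero, map_zero]
  | add y₁ y₂ h₁ h₂ => simp only [tmul_add, map_add] at h₁ h₂ ⊢; rw [h₁, h₂]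
  | tmul p q =>
    rw [theta3_tmul, theta5_tmul, mul_assoc]

lemma theta5_one (γ δ : H) (q' : H ⊗[k] H) :
    theta5 (((1 : H) ⊗ₜ[k] (γ ⊗ₜ[k] δ)) ⊗ₜ[k] q') =
      xiMap (rTensor H (S k H) q' ⊗ₜ[k] (γ ⊗ₜ[k] δ)) := by
  induction q' using TensorProduct.induction_on with
  | zero => simp only [tmul_zero, map_zero, zero_tmul]
  | add y₁ y₂ h₁ h₂ => simp only [tmul_add, map_add, add_tmul] at h₁ h₂ ⊢; rw [h₁, h₂]
  | tmul p q =>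
    rw [theta5_tmul, rTensor_tmul, xiMap_tmul, one_mul]

lemma key_dagger (Q : H ⊗[k] H) (hQ : ∀ x : H, Q * Δ k H x = Δ k H x * Q) (h : H) :
    xiMap (rTensor H (S k H) Q ⊗ₜ[k] Δ k H h) =
      zetaMap ((lTensor H (Δ k H)) (Δ k H h) ⊗ₜ[k] rTensor H (S k H) Q) := by
  set r : Coalgebra.Repr k h (H × H) := ℛ k h with hr
  set r1 : ∀ i, Coalgebra.Repr k (r.left i) (H × H) := fun i => ℛ k (r.left i) with hr1
  set r2 : ∀ i, Coalgebra.Repr k (r.right i) (H × H) := fun i => ℛ k (r.right i) with hr2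
  set r3 : ∀ i j, Coalgebra.Repr k ((r2 i).left j) (H × H) := fun i j => ℛ k ((r2 i).left j) with hr3
  symm
  calc zetaMap ((lTensor H (Δ k H)) (Δ k H h) ⊗ₜ[k] rTensor H (S k H) Q)
      = ∑ i ∈ r.index, ∑ j ∈ (r2 i).index,
          zetaMap ((r.left i ⊗ₜ[k] ((r2 i).left j ⊗ₜ[k] (r2 i).right j)) ⊗ₜ[k]
            rTensor H (S k H) Q) := by
        rw [← r.eq, map_sum, sum_tmul, map_sum]
        refine Finset.sum_congr rfl fun i _ => ?_
        rw [lTensor_tmul, ← (r2 i).eq, tmul_sum, sum_tmul, map_sum]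
    _ = ∑ i ∈ r.index, ∑ j ∈ (r2 i).index, ∑ t ∈ (r1 i).index,
          theta1 (((r1 i).left t ⊗ₜ[k] ((r1 i).right t ⊗ₜ[k]
            ((r2 i).left j ⊗ₜ[k] (r2 i).right j))) ⊗ₜ[k] rTensor H (S k H) Q) := by
        exact Finset.sum_congr rfl fun i _ => Finset.sum_congr rfl fun j _ =>
          zeta_expand (r.left i) ((r2 i).left j) ((r2 i).right j) (r1 i) _
    _ = ∑ i ∈ r.index, ∑ t ∈ (r1 i).index, ∑ j ∈ (r2 i).index,
          theta2 (((r1 i).left t ⊗ₜ[k] ((r1 i).right t ⊗ₜ[k]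
            ((r2 i).left j ⊗ₜ[k] (r2 i).right j))) ⊗ₜ[k] Q) := by
        refine Finset.sum_congr rfl fun i _ => ?_
        rw [Finset.sum_comm]
        exact Finset.sum_congr rfl fun t _ => Finset.sum_congr rfl fun j _ =>
          theta1_to_theta2 _ _ _ _ Q
    _ = ∑ i ∈ r.index, ∑ j ∈ (r2 i).index, ∑ p ∈ (r3 i j).index,
          theta2 ((r.left i ⊗ₜ[k] ((r3 i j).left p ⊗ₜ[k]
            ((r3 i j).right p ⊗ₜ[k] (r2 i).right j))) ⊗ₜ[k] Q) := by
        have quad := sum_repr_quad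
          (theta2 ∘ₗ (TensorProduct.mk k (H ⊗[k] (H ⊗[k] (H ⊗[k] H))) (H ⊗[k] H)).flip Q)
          r r1 r2 r3
        simpa using quad
    _ = ∑ i ∈ r.index, ∑ j ∈ (r2 i).index,
          XiFun (r.left i) ((r2 i).right j) (Δ k H ((r2 i).left j) * Q) := by
        refine Finset.sum_congr rfl fun i _ => Finset.sum_congr rfl fun j _ => ?_
        rw [← (r3 i j).eq, Finset.sum_mul, map_sum]
        exact Finset.sum_congr rfl fun p _ => theta2_to_Xi _ _ _ _ Q
    _ = ∑ i ∈ r.index, ∑ j ∈ (r2 i).index,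
          XiFun (r.left i) ((r2 i).right j) (Q * Δ k H ((r2 i).left j)) := by
        refine Finset.sum_congr rfl fun i _ => Finset.sum_congr rfl fun j _ => ?_
        rw [hQ]
    _ = ∑ i ∈ r.index, ∑ j ∈ (r2 i).index, ∑ p ∈ (r3 i j).index,
          theta3 ((r.left i ⊗ₜ[k] ((r3 i j).left p ⊗ₜ[k]
            ((r3 i j).right p ⊗ₜ[k] (r2 i).right j))) ⊗ₜ[k] Q) := by
        refine Finset.sum_congr rfl fun i _ => Finset.sum_congr rfl fun j _ => ?_
        rw [← (r3 i j).eq, Finset.mul_sum, map_sum]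
        exact Finset.sum_congr rfl fun p _ => Xi_to_theta3 _ _ _ _ Q
    _ = ∑ i ∈ r.index, ∑ t ∈ (r1 i).index, ∑ j ∈ (r2 i).index,
          theta3 (((r1 i).left t ⊗ₜ[k] ((r1 i).right t ⊗ₜ[k]
            ((r2 i).left j ⊗ₜ[k] (r2 i).right j))) ⊗ₜ[k] Q) := by
        have quad := sum_repr_quad
          (theta3 ∘ₗ (TensorProduct.mk k (H ⊗[k] (H ⊗[k] (H ⊗[k] H))) (H ⊗[k] H)).flip Q)
          r r1 r2 r3
        simpa using quad.symm
    _ = ∑ i ∈ r.index, counit (R := k) (r.left i) •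
          xiMap (rTensor H (S k H) Q ⊗ₜ[k] Δ k H (r.right i)) := by
        refine Finset.sum_congr rfl fun i _ => ?_
        calc ∑ t ∈ (r1 i).index, ∑ j ∈ (r2 i).index,
              theta3 (((r1 i).left t ⊗ₜ[k] ((r1 i).right t ⊗ₜ[k]
                ((r2 i).left j ⊗ₜ[k] (r2 i).right j))) ⊗ₜ[k] Q)
            = ∑ j ∈ (r2 i).index, ∑ t ∈ (r1 i).index,
              theta5 ((((r1 i).left t * S k H ((r1 i).right t)) ⊗ₜ[k]
                ((r2 i).left j ⊗ₜ[k] (r2 i).right j)) ⊗ₜ[k] Q) := by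
              rw [Finset.sum_comm]
              exact Finset.sum_congr rfl fun j _ => Finset.sum_congr rfl fun t _ =>
                theta3_to_theta5 _ _ _ _ Q
          _ = ∑ j ∈ (r2 i).index,
              theta5 (((algebraMap k H (counit (R := k) (r.left i))) ⊗ₜ[k]
                ((r2 i).left j ⊗ₜ[k] (r2 i).right j)) ⊗ₜ[k] Q) := by
              refine Finset.sum_congr rfl fun j _ => ?_
              rw [← map_sum]
              simp only [← sum_tmul]
              rw [sum_mul_antipode_eq_algebraMap_counit (r1 i)]
          _ = counit (R := k) (r.left i) •
              xiMap (rTensor H (S k H) Q ⊗ₜ[k] Δ k H (r.right i)) := by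
              have hterm : ∀ j ∈ (r2 i).index,
                  theta5 (((algebraMap k H (counit (R := k) (r.left i))) ⊗ₜ[k]
                    ((r2 i).left j ⊗ₜ[k] (r2 i).right j)) ⊗ₜ[k] Q) =
                  counit (R := k) (r.left i) •
                    xiMap (rTensor H (S k H) Q ⊗ₜ[k]
                      ((r2 i).left j ⊗ₜ[k] (r2 i).right j)) := by
                intro j _
                rw [Algebra.algebraMap_eq_smul_one, ← smul_tmul', ← smul_tmul', map_smul,
                  theta5_one]
              rw [Finset.sum_congr rfl hterm, ← Finset.smul_sum, ← map_sum, ← tmul_sum,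
                (r2 i).eq]
    _ = xiMap (rTensor H (S k H) Q ⊗ₜ[k] Δ k H h) := by
        have hterm : ∀ i ∈ r.index,
            counit (R := k) (r.left i) •
              xiMap (rTensor H (S k H) Q ⊗ₜ[k] Δ k H (r.right i)) =
            xiMap (rTensor H (S k H) Q ⊗ₜ[k]
              Δ k H (counit (R := k) (r.left i) • r.right i)) := by
          intro i _
          rw [map_smul, tmul_smul, map_smul]
        rw [Finset.sum_congr rfl hterm, ← map_sum, ← tmul_sum, ← map_sum,
          sum_counit_smul_left' r]


lemma f1_term (u' : H ⊗[k] H) (a b : H) (w : W) :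
    (TensorProduct.assoc k H W H)
        ((lTensor H (actT (k := k) (H := H) W))
          ((TensorProduct.assoc k H H W) (u' ⊗ₜ[k] (a • w))) ⊗ₜ[k] b) =
      lTensor H (rTensor H (smulW w)) (xiMap (u' ⊗ₜ[k] (a ⊗ₜ[k] b))) := by
  induction u' using TensorProduct.induction_on with
  | zero => simp only [zero_tmul, map_zero]
  | add y₁ y₂ h₁ h₂ => simp only [add_tmul, map_add] at h₁ h₂ ⊢; rw [h₁, h₂]
  | tmul p q =>
    rw [xiMap_tmul]
    simp only [TensorProduct.assoc_tmul, lTensor_tmul, rTensor_tmul, actT_tmul,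
      smulW_apply, mul_smul]

lemma f2b_term (a p q : H) (s : H ⊗[k] H) (w : W) :
    adT k H (a ⊗ₜ[k] p) ⊗ₜ[k] (rTensor H (smulW (q • w)) s) =
      lTensor H (rTensor H (smulW w)) (zetaMap ((a ⊗ₜ[k] s) ⊗ₜ[k] (p ⊗ₜ[k] q))) := by
  induction s using TensorProduct.induction_on with
  | zero => simp only [map_zero, tmul_zero, zero_tmul]
  | add y₁ y₂ h₁ h₂ =>
    simp only [map_add, tmul_add, add_tmul] at h₁ h₂ ⊢
    rw [h₁, h₂]
  | tmul b₁ b₂ =>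
    rw [zetaMap_tmul, rTensor_tmul, lTensor_tmul, rTensor_tmul]
    simp only [smulW_apply, mul_smul]

lemma f2_term (u' : H ⊗[k] H) (a b : H) (w : W) :
    (lTensor H (betaMap (k := k) (H := H) W))
        ((rTensor (H ⊗[k] W) (adT k H))
          ((tensorTensorTensorComm k H H H W)
            ((a ⊗ₜ[k] b) ⊗ₜ[k]
              (lTensor H (actT (k := k) (H := H) W)
                ((TensorProduct.assoc k H H W) (u' ⊗ₜ[k] w)))))) =
      lTensor H (rTensor H (smulW w)) (zetaMap ((a ⊗ₜ[k] Δ k H b) ⊗ₜ[k] u')) := by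
  induction u' using TensorProduct.induction_on with
  | zero => simp only [zero_tmul, map_zero, tmul_zero]
  | add y₁ y₂ h₁ h₂ =>
    simp only [add_tmul, map_add, tmul_add] at h₁ h₂ ⊢
    rw [h₁, h₂]
  | tmul p q =>
    rw [TensorProduct.assoc_tmul, lTensor_tmul, actT_tmul,
      tensorTensorTensorComm_tmul, rTensor_tmul, lTensor_tmul, betaMap_tmul]
    exact f2b_term a p q (Δ k H b) w

lemma beta_colinear (R : H ⊗[k] H)
    (hcc : ∀ h : H, R * Δ k H h = (TensorProduct.comm k H H) (Δ k H h) * R) :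
    barCoact (coactR R (actT (k := k) (H := H) W)) H ∘ₗ betaMap (k := k) (H := H) W =
      lTensor H (betaMap (k := k) (H := H) W) ∘ₗ
        inducedCoact (coactR R (actT (k := k) (H := H) W)) := by
  apply TensorProduct.ext'
  intro h w
  have hu : uElt k H R = rTensor H (S k H) ((TensorProduct.comm k H H) R * R) := rfl
  have hco : ∀ x : W, coactR R (actT (k := k) (H := H) W) x =
      (lTensor H (actT (k := k) (H := H) W))
        ((TensorProduct.assoc k H H W) (uElt k H R ⊗ₜ[k] x)) := by
    intro x; simp [coactR]
  simp only [coe_comp, Function.comp_apply]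
  set r : Coalgebra.Repr k h (H × H) := ℛ k h with hr
  -- left hand side
  have hLHS : barCoact (coactR R (actT (k := k) (H := H) W)) H
        (betaMap (k := k) (H := H) W (h ⊗ₜ[k] w)) =
      lTensor H (rTensor H (smulW w)) (xiMap (uElt k H R ⊗ₜ[k] Δ k H h)) := by
    rw [betaMap_tmul, ← r.eq, map_sum, map_sum]
    have hterm : ∀ i ∈ r.index,
        barCoact (coactR R (actT (k := k) (H := H) W)) H
          ((rTensor H (smulW w)) (r.left i ⊗ₜ[k] r.right i)) =
        lTensor H (rTensor H (smulW w))
          (xiMap (uElt k H R ⊗ₜ[k] (r.left i ⊗ₜ[k] r.right i))) := by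
      intro i _
      rw [rTensor_tmul, smulW_apply]
      unfold barCoact
      simp only [coe_comp, Function.comp_apply, rTensor_tmul, LinearEquiv.coe_coe]
      rw [hco]
      exact f1_term (uElt k H R) (r.left i) (r.right i) w
    rw [Finset.sum_congr rfl hterm, ← map_sum, ← map_sum, ← tmul_sum, r.eq]
  -- right hand side
  have hRHS : (lTensor H (betaMap (k := k) (H := H) W))
        (inducedCoact (coactR R (actT (k := k) (H := H) W)) (h ⊗ₜ[k] w)) =
      lTensor H (rTensor H (smulW w))
        (zetaMap ((lTensor H (Δ k H)) (Δ k H h) ⊗ₜ[k] uElt k H R)) := by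
    unfold inducedCoact
    simp only [coe_comp, Function.comp_apply, TensorProduct.map_tmul,
      LinearEquiv.coe_coe, id_coe, id_eq]
    rw [hco w]
    have hΔ : Δ k H h = ∑ i ∈ r.index, r.left i ⊗ₜ[k] r.right i := r.eq.symm
    rw [hΔ, sum_tmul, map_sum, map_sum, map_sum]
    have hterm : ∀ i ∈ r.index,
        (lTensor H (betaMap (k := k) (H := H) W))
          ((rTensor (H ⊗[k] W) (adT k H))
            ((tensorTensorTensorComm k H H H W)
              ((r.left i ⊗ₜ[k] r.right i) ⊗ₜ[k]
                (lTensor H (actT (k := k) (H := H) W)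
                  ((TensorProduct.assoc k H H W) (uElt k H R ⊗ₜ[k] w)))))) =
        lTensor H (rTensor H (smulW w))
          (zetaMap ((r.left i ⊗ₜ[k] Δ k H (r.right i)) ⊗ₜ[k] uElt k H R)) := by
      intro i _
      exact f2_term (uElt k H R) (r.left i) (r.right i) w
    rw [Finset.sum_congr rfl hterm, ← map_sum]
    congr 1
    rw [← map_sum, ← sum_tmul]
    congr 1
    have hlt : ∀ i ∈ r.index, r.left i ⊗ₜ[k] Δ k H (r.right i) =
        (lTensor H (Δ k H)) (r.left i ⊗ₜ[k] r.right i) := by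
      intro i _; rw [lTensor_tmul]
    rw [Finset.sum_congr rfl hlt, ← map_sum, ← hΔ]
  rw [hLHS, hRHS, hu]
  exact congrArg _ (key_dagger ((TensorProduct.comm k H H) R * R)
    (Qcom R hcc) h)

end Part4



/-- For a finite-dimensional quasi-triangular Hopf algebra `(H,R)` and a
left `H`-module `W` (with its canonical `H_R`-comodule structure), the map
`H ⊗ W → W̄ ⊗ H`, `h ⊗ w ↦ h₍₁₎ w ⊗ h₍₂₎` is an isomorphism in `{}_H^{H_R}𝓜`, with
inverse given by `w ⊗ h ↦ S⁻¹(h₍₁₎) w ⊗ h₍₂₎`. -/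
theorem betaMap_iso [FiniteDimensional k H] (R : H ⊗[k] H)
    (hR : IsQuasiTriangular k H R)
    (S' : H →ₗ[k] H) (hS'l : ∀ x : H, S' (S k H x) = x)
    (hS'r : ∀ x : H, S k H (S' x) = x)
    (W : Type*) [AddCommGroup W] [Module k W] [Module H W] [IsScalarTower k H W] :
    (gammaMap W S' ∘ₗ betaMap W = LinearMap.id) ∧
      (betaMap W ∘ₗ gammaMap W S' = LinearMap.id) ∧
      (betaMap W ∘ₗ regAct W = diagAct (actT (k := k) (H := H) W) (actT (k := k) (H := H) H) ∘ₗ lTensor H (betaMap W)) ∧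
      (barCoact (coactR R (actT W)) H ∘ₗ betaMap W =
        lTensor H (betaMap W) ∘ₗ inducedCoact (coactR R (actT W))) := by
  refine ⟨gamma_beta_id S' hS'l hS'r, beta_gamma_id S' hS'l hS'r, beta_module_map,
    beta_colinear R hR.comul_compat⟩

end Paper
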